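/- The matrices B21, B22, B23 generate a free abelian group of rank 3: for all integers i, j, k, if B21^i · B22^j · B23^k equals the identity matrix, then i = j = k = 0. -/

import Mathlib

open Matrix Polynomial

def A2 : Matrix (Fin 4) (Fin 4) ℚ :=
  !![0, 1, 0, 0; 0, 0, 1, 0; 0, 0, 0, 1; 1, -4, 1, 4]

lemma hdetA2 : A2.det ≠ 0 := by
  have e : (1 : Fin 4).succAbove 2 = 3 := by decide
  norm_num [A2, Matrix.det_succ_row_zero, Fin.sum_univ_succ, e,
    Matrix.cons_val_two, Matrix.cons_val_three, Matrix.vecHead, Matrix.vecTail]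

lemma hdetA2sub : (A2 - 1).det ≠ 0 := by
  have h : A2 - 1 = !![-1, 1, 0, 0; 0, -1, 1, 0; 0, 0, -1, 1; 1, -4, 1, 3] := by
    ext i j
    fin_cases i <;> fin_cases j <;>
      simp [A2, Matrix.one_apply, Matrix.vecHead, Matrix.vecTail] <;> norm_num
  rw [h]
  have e : (1 : Fin 4).succAbove 2 = 3 := by decide
  norm_num [Matrix.det_succ_row_zero, Fin.sum_univ_succ, e,
    Matrix.cons_val_two, Matrix.cons_val_three, Matrix.vecHead, Matrix.vecTail]

lemma hdetA2add : (A2 + 1).det ≠ 0 := by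
  have h : A2 + 1 = !![1, 1, 0, 0; 0, 1, 1, 0; 0, 0, 1, 1; 1, -4, 1, 5] := by
    ext i j
    fin_cases i <;> fin_cases j <;>
      simp [A2, Matrix.one_apply, Matrix.vecHead, Matrix.vecTail] <;> norm_num
  rw [h]
  have e : (1 : Fin 4).succAbove 2 = 3 := by decide
  norm_num [Matrix.det_succ_row_zero, Fin.sum_univ_succ, e,
    Matrix.cons_val_two, Matrix.cons_val_three, Matrix.vecHead, Matrix.vecTail]

noncomputable def gA2 : GL (Fin 4) ℚ := Matrix.GeneralLinearGroup.mkOfDetNeZero A2 hdetA2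
noncomputable def uA2 : GL (Fin 4) ℚ := Matrix.GeneralLinearGroup.mkOfDetNeZero (A2 - 1) hdetA2sub
noncomputable def vA2 : GL (Fin 4) ℚ := Matrix.GeneralLinearGroup.mkOfDetNeZero (A2 + 1) hdetA2add

noncomputable def B21 : GL (Fin 4) ℚ := (gA2 ^ 2)⁻¹
noncomputable def B22 : GL (Fin 4) ℚ := uA2 ^ 2 * (gA2 ^ 2)⁻¹
noncomputable def B23 : GL (Fin 4) ℚ := vA2 * gA2⁻¹

-- ## auxiliary infrastructure

noncomputable def ψ : GL (Fin 4) ℚ →* (Matrix (Fin 4) (Fin 4) ℝ)ˣ :=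
  Units.map ((algebraMap ℚ ℝ).mapMatrix).toMonoidHom

def A2R : Matrix (Fin 4) (Fin 4) ℝ :=
  !![0, 1, 0, 0; 0, 0, 1, 0; 0, 0, 0, 1; 1, -4, 1, 4]

lemma coe_psi_g : ((ψ gA2 : (Matrix (Fin 4) (Fin 4) ℝ)ˣ) : Matrix (Fin 4) (Fin 4) ℝ) = A2R := by
  show A2.map (algebraMap ℚ ℝ) = A2R
  ext i j
  fin_cases i <;> fin_cases j <;> simp [A2, A2R, Matrix.map_apply] <;> norm_num

lemma coe_psi_u : ((ψ uA2 : (Matrix (Fin 4) (Fin 4) ℝ)ˣ) : Matrix (Fin 4) (Fin 4) ℝ) = A2R - 1 := by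
  show (A2 - 1).map (algebraMap ℚ ℝ) = A2R - 1
  ext i j
  fin_cases i <;> fin_cases j <;>
    simp [A2, A2R, Matrix.map_apply, Matrix.one_apply] <;> norm_num

lemma coe_psi_v : ((ψ vA2 : (Matrix (Fin 4) (Fin 4) ℝ)ˣ) : Matrix (Fin 4) (Fin 4) ℝ) = A2R + 1 := by
  show (A2 + 1).map (algebraMap ℚ ℝ) = A2R + 1
  ext i j
  fin_cases i <;> fin_cases j <;>
    simp [A2, A2R, Matrix.map_apply, Matrix.one_apply] <;> norm_num

abbrev MR := Matrix (Fin 4) (Fin 4) ℝ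

lemma eig_pow (W : MRˣ) (s : ℝ) (v : Fin 4 → ℝ)
    (hW : (W : MR) *ᵥ v = s • v) (n : ℕ) :
    ((W ^ n : MRˣ) : MR) *ᵥ v = s ^ n • v := by
  induction n with
  | zero => simp [Matrix.one_mulVec]
  | succ m ih =>
    rw [pow_succ, Units.val_mul, ← Matrix.mulVec_mulVec, hW, Matrix.mulVec_smul, ih,
      smul_smul, pow_succ]
    ring_nf

lemma eig_inv (W : MRˣ) (s : ℝ) (hs : s ≠ 0) (v : Fin 4 → ℝ)
    (hW : (W : MR) *ᵥ v = s • v) :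
    ((W⁻¹ : MRˣ) : MR) *ᵥ v = s⁻¹ • v := by
  have h1 : ((W⁻¹ : MRˣ) : MR) *ᵥ ((W : MR) *ᵥ v) = v := by
    rw [Matrix.mulVec_mulVec, ← Units.val_mul, inv_mul_cancel, Units.val_one,
      Matrix.one_mulVec]
  rw [hW, Matrix.mulVec_smul] at h1
  calc ((W⁻¹ : MRˣ) : MR) *ᵥ v = s⁻¹ • (s • (((W⁻¹ : MRˣ) : MR) *ᵥ v)) := by
        rw [smul_smul, inv_mul_cancel₀ hs, one_smul]
    _ = s⁻¹ • v := by rw [h1]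

lemma eig_zpow (W : MRˣ) (s : ℝ) (hs : s ≠ 0) (v : Fin 4 → ℝ)
    (hW : (W : MR) *ᵥ v = s • v) (n : ℤ) :
    ((W ^ n : MRˣ) : MR) *ᵥ v = s ^ n • v := by
  obtain ⟨m, rfl | rfl⟩ := Int.eq_nat_or_neg n
  · rw [zpow_natCast, zpow_natCast]
    exact eig_pow W s v hW m
  · rw [_root_.zpow_neg, zpow_natCast, _root_.zpow_neg, zpow_natCast]
    exact eig_inv (W ^ m) (s ^ m) (pow_ne_zero m hs) v (eig_pow W s v hW m)

lemma abs_zpow' (a : ℝ) (n : ℤ) : |a ^ n| = |a| ^ n := by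
  obtain ⟨m, rfl | rfl⟩ := Int.eq_nat_or_neg n
  · rw [zpow_natCast, zpow_natCast, abs_pow]
  · rw [_root_.zpow_neg, _root_.zpow_neg, zpow_natCast, zpow_natCast, abs_inv, abs_pow]

lemma key_eq (i j k : ℤ) (h : B21 ^ i * B22 ^ j * B23 ^ k = 1)
    (r : ℝ) (hr : r ^ 4 = 4 * r ^ 3 + r ^ 2 - 4 * r + 1)
    (h0 : r ≠ 0) (hm1 : r - 1 ≠ 0) (hp1 : r + 1 ≠ 0) :
    |r - 1| ^ (2 * j) * |r + 1| ^ k = |r| ^ (2 * i + 2 * j + k) := by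
  set v : Fin 4 → ℝ := ![1, r, r ^ 2, r ^ 3] with hv
  set G := ψ gA2 with hGdef
  set U := ψ uA2 with hUdef
  set V := ψ vA2 with hVdef
  have hG' : A2R *ᵥ v = r • v := by
    funext t
    fin_cases t <;>
      simp [A2R, Matrix.mulVec, dotProduct, Fin.sum_univ_four, hv] <;>
      ring_nf <;> linarith [hr]
  have hG : (G : MR) *ᵥ v = r • v := by rw [hGdef, coe_psi_g]; exact hG'
  have hU : (U : MR) *ᵥ v = (r - 1) • v := by
    rw [hUdef, coe_psi_u, Matrix.sub_mulVec, Matrix.one_mulVec, hG', sub_smul, one_smul]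
  have hV : (V : MR) *ᵥ v = (r + 1) • v := by
    rw [hVdef, coe_psi_v, Matrix.add_mulVec, Matrix.one_mulVec, hG', add_smul, one_smul]
  have hGz := eig_zpow G r h0 v hG
  have hUz := eig_zpow U (r - 1) hm1 v hU
  have hVz := eig_zpow V (r + 1) hp1 v hV
  have hUG : Commute U G := Units.ext (by
    rw [Units.val_mul, Units.val_mul, hUdef, hGdef, coe_psi_u, coe_psi_g]; noncomm_ring)
  have hVG : Commute V G := Units.ext (by
    rw [Units.val_mul, Units.val_mul, hVdef, hGdef, coe_psi_v, coe_psi_g]; noncomm_ring)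
  -- map the relation to real matrices
  have hh : (ψ B21) ^ i * (ψ B22) ^ j * (ψ B23) ^ k = 1 := by
    rw [← map_zpow, ← map_zpow, ← map_zpow, ← _root_.map_mul, ← _root_.map_mul, h, _root_.map_one]
  have hB21 : (ψ B21) ^ i = G ^ (-(2 * i)) := by
    rw [B21, map_inv, map_pow, hGdef.symm]
    group
  have hB22 : (ψ B22) ^ j = U ^ (2 * j) * G ^ (-(2 * j)) := by
    rw [B22, _root_.map_mul, map_inv, map_pow, map_pow, hGdef.symm, hUdef.symm]
    rw [Commute.mul_zpow ((hUG.pow_pow 2 2).inv_right) j]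
    congr 1
    · group
    · group
  have hB23 : (ψ B23) ^ k = V ^ k * G ^ (-k) := by
    rw [B23, _root_.map_mul, map_inv, hGdef.symm, hVdef.symm]
    rw [Commute.mul_zpow (hVG.inv_right) k]
    congr 1
    group
  rw [hB21, hB22, hB23] at hh
  -- evaluate on the eigenvector
  have hmv : ((G ^ (-(2 * i)) * (U ^ (2 * j) * G ^ (-(2 * j))) * (V ^ k * G ^ (-k)) : MRˣ) : MR)
      *ᵥ v = (r ^ (-(2 * i)) * ((r - 1) ^ (2 * j) * r ^ (-(2 * j)))
        * ((r + 1) ^ k * r ^ (-k))) • v := by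
    simp only [Units.val_mul, ← Matrix.mulVec_mulVec, Matrix.mulVec_smul,
      hGz, hUz, hVz, smul_smul]
    congr 1
    ring
  rw [hh, Units.val_one, Matrix.one_mulVec] at hmv
  have hS : r ^ (-(2 * i)) * ((r - 1) ^ (2 * j) * r ^ (-(2 * j)))
      * ((r + 1) ^ k * r ^ (-k)) = 1 := by
    have := congrFun hmv.symm 0
    simpa [hv] using this
  -- take absolute values
  have habs := congrArg abs hS
  simp only [abs_mul, abs_zpow', abs_one] at habs
  have hz : |r| ≠ 0 := abs_ne_zero.mpr h0
  have hzz : |r| ^ (2 * i + 2 * j + k) * |r| ^ (-(2 * i)) * |r| ^ (-(2 * j)) * |r| ^ (-k)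
      = 1 := by
    rw [← zpow_add₀ hz, ← zpow_add₀ hz, ← zpow_add₀ hz,
      show 2 * i + 2 * j + k + -(2 * i) + -(2 * j) + -k = 0 by ring, zpow_zero]
  linear_combination (-(|r - 1| ^ (2 * j) * |r + 1| ^ k)) * hzz
    + |r| ^ (2 * i + 2 * j + k) * habs

section ZpowFacts

variable {X : ℝ} {a : ℤ}

lemma my1 (hX : 1 < X) (ha : 0 ≤ a) : 1 ≤ X ^ a := by
  lift a to ℕ using ha
  rw [zpow_natCast]
  exact one_le_pow₀ hX.le

lemma my3 (hX0 : 0 < X) (hX : X < 1) (ha : 0 ≤ a) : X ^ a ≤ 1 := by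
  lift a to ℕ using ha
  rw [zpow_natCast]
  exact pow_le_one₀ hX0.le hX.le

lemma my2 (hX : 1 < X) (ha : a ≤ 0) : X ^ a ≤ 1 := by
  have h1 : 1 ≤ X ^ (-a) := my1 hX (by omega)
  rw [_root_.zpow_neg] at h1
  have hpos : 0 < X ^ a := zpow_pos (by linarith) a
  nlinarith [mul_inv_cancel₀ (ne_of_gt hpos)]

lemma my4 (hX0 : 0 < X) (hX : X < 1) (ha : a ≤ 0) : 1 ≤ X ^ a := by
  have h1 : X ^ (-a) ≤ 1 := my3 hX0 hX (by omega)
  rw [_root_.zpow_neg] at h1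
  have hpos : 0 < X ^ a := zpow_pos hX0 a
  nlinarith [mul_inv_cancel₀ (ne_of_gt hpos)]

lemma smy1 (hX : 1 < X) (ha : 0 < a) : 1 < X ^ a := by
  lift a to ℕ using ha.le
  rw [zpow_natCast]
  exact one_lt_pow₀ hX (by exact_mod_cast ha.ne')

lemma smy3 (hX0 : 0 < X) (hX : X < 1) (ha : 0 < a) : X ^ a < 1 := by
  lift a to ℕ using ha.le
  rw [zpow_natCast]
  exact pow_lt_one₀ hX0.le hX (by exact_mod_cast ha.ne')

lemma my5 (hX0 : 0 < X) (hne : X ≠ 1) (h : X ^ a = 1) : a = 0 := by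
  rcases lt_trichotomy a 0 with h' | h' | h'
  · rcases lt_or_gt_of_ne hne with hX | hX
    · have := smy3 hX0 hX (by omega : 0 < -a)
      rw [_root_.zpow_neg, h] at this
      norm_num at this
    · have := smy1 hX (by omega : 0 < -a)
      rw [_root_.zpow_neg, h] at this
      norm_num at this
  · exact h'
  · rcases lt_or_gt_of_ne hne with hX | hX
    · have := smy3 hX0 hX h'
      rw [h] at this
      norm_num at this
    · have := smy1 hX h'
      rw [h] at this
      norm_num at this

end ZpowFacts

lemma core_ge {X Y Z : ℝ} {a b c : ℤ} (hX0 : 0 < X) (hY0 : 0 < Y) (hZ0 : 0 < Z)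
    (hXne : X ≠ 1) (hYne : Y ≠ 1) (hZne : Z ≠ 1)
    (h1 : 1 ≤ X ^ a) (h2 : 1 ≤ Y ^ b) (h3 : Z ^ c ≤ 1)
    (h : X ^ a * Y ^ b = Z ^ c) : a = 0 ∧ b = 0 ∧ c = 0 := by
  have hxp : 0 < X ^ a := zpow_pos hX0 a
  have hyp : 0 < Y ^ b := zpow_pos hY0 b
  have hx : X ^ a = 1 := by nlinarith
  have hy : Y ^ b = 1 := by nlinarith
  have hz : Z ^ c = 1 := by nlinarith
  exact ⟨my5 hX0 hXne hx, my5 hY0 hYne hy, my5 hZ0 hZne hz⟩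

lemma core_le {X Y Z : ℝ} {a b c : ℤ} (hX0 : 0 < X) (hY0 : 0 < Y) (hZ0 : 0 < Z)
    (hXne : X ≠ 1) (hYne : Y ≠ 1) (hZne : Z ≠ 1)
    (h1 : X ^ a ≤ 1) (h2 : Y ^ b ≤ 1) (h3 : 1 ≤ Z ^ c)
    (h : X ^ a * Y ^ b = Z ^ c) : a = 0 ∧ b = 0 ∧ c = 0 := by
  have hxp : 0 < X ^ a := zpow_pos hX0 a
  have hyp : 0 < Y ^ b := zpow_pos hY0 b
  have hx : X ^ a = 1 := by nlinarith
  have hy : Y ^ b = 1 := by nlinarith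
  have hz : Z ^ c = 1 := by nlinarith
  exact ⟨my5 hX0 hXne hx, my5 hY0 hYne hy, my5 hZ0 hZne hz⟩

lemma sq_zpow (x : ℝ) (n : ℤ) : (x ^ (2 : ℕ)) ^ n = (x ^ n) ^ (2 : ℕ) := by
  rw [← zpow_natCast x 2, ← _root_.zpow_mul, mul_comm, _root_.zpow_mul, zpow_natCast]

lemma exists_root_up {lo hi : ℝ} (hle : lo ≤ hi)
    (h1 : lo ^ 4 - 4 * lo ^ 3 - lo ^ 2 + 4 * lo - 1 ≤ 0)
    (h2 : 0 ≤ hi ^ 4 - 4 * hi ^ 3 - hi ^ 2 + 4 * hi - 1) :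
    ∃ r, lo ≤ r ∧ r ≤ hi ∧ r ^ 4 = 4 * r ^ 3 + r ^ 2 - 4 * r + 1 := by
  have hc : ContinuousOn (fun x : ℝ => x ^ 4 - 4 * x ^ 3 - x ^ 2 + 4 * x - 1)
      (Set.Icc lo hi) := by fun_prop
  obtain ⟨r, hmem, hr⟩ := intermediate_value_Icc hle hc (Set.mem_Icc.mpr ⟨h1, h2⟩)
  simp only at hr
  exact ⟨r, hmem.1, hmem.2, by linarith⟩

lemma exists_root_down {lo hi : ℝ} (hle : lo ≤ hi)
    (h1 : 0 ≤ lo ^ 4 - 4 * lo ^ 3 - lo ^ 2 + 4 * lo - 1)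
    (h2 : hi ^ 4 - 4 * hi ^ 3 - hi ^ 2 + 4 * hi - 1 ≤ 0) :
    ∃ r, lo ≤ r ∧ r ≤ hi ∧ r ^ 4 = 4 * r ^ 3 + r ^ 2 - 4 * r + 1 := by
  have hc : ContinuousOn (fun x : ℝ => x ^ 4 - 4 * x ^ 3 - x ^ 2 + 4 * x - 1)
      (Set.Icc lo hi) := by fun_prop
  obtain ⟨r, hmem, hr⟩ := intermediate_value_Icc' hle hc (Set.mem_Icc.mpr ⟨h2, h1⟩)
  simp only at hr
  exact ⟨r, hmem.1, hmem.2, by linarith⟩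

set_option maxHeartbeats 1000000 in
theorem statement12 (i j k : ℤ) (h : B21 ^ i * B22 ^ j * B23 ^ k = 1) :
    i = 0 ∧ j = 0 ∧ k = 0 := by
  obtain ⟨r1, hr1a, hr1b, hr1⟩ := exists_root_up
    (by norm_num : (0.29:ℝ) ≤ 0.30) (by norm_num) (by norm_num)
  obtain ⟨r2, hr2a, hr2b, hr2⟩ := exists_root_down
    (by norm_num : (-1.09:ℝ) ≤ -1.08) (by norm_num) (by norm_num)
  obtain ⟨r3, hr3a, hr3b, hr3⟩ := exists_root_down
    (by norm_num : (0.77:ℝ) ≤ 0.78) (by norm_num) (by norm_num)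
  obtain ⟨r4, hr4a, hr4b, hr4⟩ := exists_root_up
    (by norm_num : (4.01:ℝ) ≤ 4.02) (by norm_num) (by norm_num)
  -- the scalar equations coming from the four real eigenvalues
  have e1 := key_eq i j k h r1 hr1 (ne_of_gt (by linarith)) (ne_of_lt (by linarith))
    (ne_of_gt (by linarith))
  have e2 := key_eq i j k h r2 hr2 (ne_of_lt (by linarith)) (ne_of_lt (by linarith))
    (ne_of_lt (by linarith))
  have e3 := key_eq i j k h r3 hr3 (ne_of_gt (by linarith)) (ne_of_lt (by linarith))
    (ne_of_gt (by linarith))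
  have e4 := key_eq i j k h r4 hr4 (ne_of_gt (by linarith)) (ne_of_gt (by linarith))
    (ne_of_gt (by linarith))
  clear h hr1 hr2 hr3 hr4
  rw [abs_of_neg (by linarith : r1 - 1 < 0), abs_of_pos (by linarith : (0:ℝ) < r1 + 1),
    abs_of_pos (by linarith : (0:ℝ) < r1)] at e1
  rw [abs_of_neg (by linarith : r2 - 1 < 0), abs_of_neg (by linarith : r2 + 1 < 0),
    abs_of_neg (by linarith : r2 < 0)] at e2
  rw [abs_of_neg (by linarith : r3 - 1 < 0), abs_of_pos (by linarith : (0:ℝ) < r3 + 1),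
    abs_of_pos (by linarith : (0:ℝ) < r3)] at e3
  rw [abs_of_pos (by linarith : (0:ℝ) < r4 - 1), abs_of_pos (by linarith : (0:ℝ) < r4 + 1),
    abs_of_pos (by linarith : (0:ℝ) < r4)] at e4
  -- base bounds (proved first, while the context is small)
  have hX2 : (1:ℝ) < -(r2 - 1) := by linarith
  have hY2a : (0:ℝ) < -(r2 + 1) := by linarith
  have hY2b : -(r2 + 1) < 1 := by linarith
  have hZ2 : (1:ℝ) < -r2 := by linarith
  have hX4 : (1:ℝ) < r4 - 1 := by linarith
  have hY4 : (1:ℝ) < r4 + 1 := by linarith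
  have hZ4 : (1:ℝ) < r4 := by linarith
  have hXC : (1:ℝ) < (-(r1 - 1)) * (-(r2 - 1)) := by
    have : (0.70:ℝ) * 2.08 ≤ (-(r1 - 1)) * (-(r2 - 1)) :=
      mul_le_mul (by linarith) (by linarith) (by norm_num) (by linarith)
    linarith
  have hYCa : (0:ℝ) < (r1 + 1) * (-(r2 + 1)) :=
    mul_pos (by linarith) (by linarith)
  have hYCb : (r1 + 1) * (-(r2 + 1)) < 1 := by
    have : (r1 + 1) * (-(r2 + 1)) ≤ 1.30 * 0.09 :=
      mul_le_mul (by linarith) (by linarith) (by linarith) (by norm_num)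
    linarith
  have hZCa : (0:ℝ) < r1 * (-r2) := mul_pos (by linarith) (by linarith)
  have hZCb : r1 * (-r2) < 1 := by
    have : r1 * (-r2) ≤ 0.30 * 1.09 :=
      mul_le_mul (by linarith) (by linarith) (by linarith) (by norm_num)
    linarith
  have h2p : (0:ℝ) < -(r2 - 1) := by linarith
  have h3p : (0:ℝ) < -(r3 - 1) := by linarith
  have h4p : (0:ℝ) < r4 - 1 := by linarith
  have hXA0 : (0:ℝ) < (-(r2 - 1)) ^ (2:ℕ) * (-(r3 - 1)) ^ (2:ℕ) * (r4 - 1) :=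
    mul_pos (mul_pos (pow_pos h2p 2) (pow_pos h3p 2)) h4p
  have hXAb : (-(r2 - 1)) ^ (2:ℕ) * (-(r3 - 1)) ^ (2:ℕ) * (r4 - 1) < 1 := by
    have b2 : (-(r2 - 1)) ^ (2:ℕ) ≤ 2.09 ^ 2 := pow_le_pow_left₀ h2p.le (by linarith) 2
    have b3 : (-(r3 - 1)) ^ (2:ℕ) ≤ 0.23 ^ 2 := pow_le_pow_left₀ h3p.le (by linarith) 2
    have m1 : (-(r2 - 1)) ^ (2:ℕ) * (-(r3 - 1)) ^ (2:ℕ) ≤ 2.09 ^ 2 * 0.23 ^ 2 :=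
      mul_le_mul b2 b3 (pow_pos h3p 2).le (by norm_num)
    have m2 : (-(r2 - 1)) ^ (2:ℕ) * (-(r3 - 1)) ^ (2:ℕ) * (r4 - 1)
        ≤ (2.09 ^ 2 * 0.23 ^ 2) * 3.02 :=
      mul_le_mul m1 (by linarith) h4p.le (by norm_num)
    have : ((2.09:ℝ) ^ 2 * 0.23 ^ 2) * 3.02 < 1 := by norm_num
    linarith
  have hYA0 : (0:ℝ) < (-(r2 + 1)) ^ (2:ℕ) * (r3 + 1) ^ (2:ℕ) * (r4 + 1) :=
    mul_pos (mul_pos (pow_pos hY2a 2) (pow_pos (by linarith) 2)) (by linarith)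
  have hYAb : (-(r2 + 1)) ^ (2:ℕ) * (r3 + 1) ^ (2:ℕ) * (r4 + 1) < 1 := by
    have b2 : (-(r2 + 1)) ^ (2:ℕ) ≤ 0.09 ^ 2 := pow_le_pow_left₀ hY2a.le (by linarith) 2
    have b3 : (r3 + 1) ^ (2:ℕ) ≤ 1.78 ^ 2 :=
      pow_le_pow_left₀ (by linarith : (0:ℝ) ≤ r3 + 1) (by linarith) 2
    have m1 : (-(r2 + 1)) ^ (2:ℕ) * (r3 + 1) ^ (2:ℕ) ≤ 0.09 ^ 2 * 1.78 ^ 2 :=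
      mul_le_mul b2 b3 (pow_pos (by linarith : (0:ℝ) < r3 + 1) 2).le (by norm_num)
    have m2 : (-(r2 + 1)) ^ (2:ℕ) * (r3 + 1) ^ (2:ℕ) * (r4 + 1)
        ≤ (0.09 ^ 2 * 1.78 ^ 2) * 5.02 :=
      mul_le_mul m1 (by linarith) (by linarith) (by norm_num)
    have : ((0.09:ℝ) ^ 2 * 1.78 ^ 2) * 5.02 < 1 := by norm_num
    linarith
  have hZA : (1:ℝ) < (-r2) ^ (2:ℕ) * r3 ^ (2:ℕ) * r4 := by
    have b2 : (1.08:ℝ) ^ 2 ≤ (-r2) ^ (2:ℕ) := pow_le_pow_left₀ (by norm_num) (by linarith) 2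
    have b3 : (0.77:ℝ) ^ 2 ≤ r3 ^ (2:ℕ) := pow_le_pow_left₀ (by norm_num) (by linarith) 2
    have m1 : (1.08:ℝ) ^ 2 * 0.77 ^ 2 ≤ (-r2) ^ (2:ℕ) * r3 ^ (2:ℕ) :=
      mul_le_mul b2 b3 (by norm_num) (pow_pos (by linarith : (0:ℝ) < -r2) 2).le
    have m2 : ((1.08:ℝ) ^ 2 * 0.77 ^ 2) * 4.01 ≤ (-r2) ^ (2:ℕ) * r3 ^ (2:ℕ) * r4 :=
      mul_le_mul m1 (by linarith) (by norm_num)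
        (mul_pos (pow_pos (by linarith : (0:ℝ) < -r2) 2)
          (pow_pos (by linarith : (0:ℝ) < r3) 2)).le
    have : (1:ℝ) < ((1.08:ℝ) ^ 2 * 0.77 ^ 2) * 4.01 := by norm_num
    linarith
  -- combined equation for the (+,-,?) direction : roots 1 and 2
  have eC : ((-(r1 - 1)) * (-(r2 - 1))) ^ (2 * j) * ((r1 + 1) * (-(r2 + 1))) ^ k
      = (r1 * (-r2)) ^ (2 * i + 2 * j + k) := by
    rw [mul_zpow, mul_zpow, mul_zpow]
    linear_combination ((-(r2 - 1)) ^ (2 * j) * (-(r2 + 1)) ^ k) * e1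
      + (r1 ^ (2 * i + 2 * j + k)) * e2
  -- combined equation for the (+,+,+) direction : roots 2 (twice), 3 (twice) and 4
  have eA : ((-(r2 - 1)) ^ (2:ℕ) * (-(r3 - 1)) ^ (2:ℕ) * (r4 - 1)) ^ (2 * j)
      * ((-(r2 + 1)) ^ (2:ℕ) * (r3 + 1) ^ (2:ℕ) * (r4 + 1)) ^ k
      = ((-r2) ^ (2:ℕ) * r3 ^ (2:ℕ) * r4) ^ (2 * i + 2 * j + k) := by
    rw [mul_zpow, mul_zpow, mul_zpow, mul_zpow, mul_zpow, mul_zpow,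
      sq_zpow, sq_zpow, sq_zpow, sq_zpow, sq_zpow, sq_zpow]
    linear_combination
      (((-(r2 - 1)) ^ (2 * j) * (-(r2 + 1)) ^ k + (-r2) ^ (2 * i + 2 * j + k))
        * ((-(r3 - 1)) ^ (2 * j)) ^ (2:ℕ) * ((r3 + 1) ^ k) ^ (2:ℕ)
        * ((r4 - 1) ^ (2 * j) * (r4 + 1) ^ k)) * e2
      + (((-r2) ^ (2 * i + 2 * j + k)) ^ (2:ℕ)
        * ((-(r3 - 1)) ^ (2 * j) * (r3 + 1) ^ k + r3 ^ (2 * i + 2 * j + k))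
        * ((r4 - 1) ^ (2 * j) * (r4 + 1) ^ k)) * e3
      + (((-r2) ^ (2 * i + 2 * j + k)) ^ (2:ℕ) * (r3 ^ (2 * i + 2 * j + k)) ^ (2:ℕ)) * e4
  -- case analysis on the signs of the three exponents
  rcases le_or_gt 0 (2 * j) with ha | ha <;> rcases le_or_gt 0 k with hb | hb <;>
    rcases le_or_gt 0 (2 * i + 2 * j + k) with hc | hc
  · obtain ⟨h1, h2, h3⟩ := core_le hXA0 hYA0 (by linarith) (ne_of_lt hXAb) (ne_of_lt hYAb)
      (ne_of_gt hZA) (my3 hXA0 hXAb ha) (my3 hYA0 hYAb hb) (my1 hZA hc) eA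
    exact ⟨by omega, by omega, by omega⟩
  · obtain ⟨h1, h2, h3⟩ := core_ge (by linarith) (by linarith) (by linarith)
      (ne_of_gt hX4) (ne_of_gt hY4) (ne_of_gt hZ4)
      (my1 hX4 ha) (my1 hY4 hb) (my2 hZ4 hc.le) e4
    exact ⟨by omega, by omega, by omega⟩
  · obtain ⟨h1, h2, h3⟩ := core_ge (by linarith) hYCa hZCa
      (ne_of_gt hXC) (ne_of_lt hYCb) (ne_of_lt hZCb)
      (my1 hXC ha) (my4 hYCa hYCb hb.le) (my3 hZCa hZCb hc) eC
    exact ⟨by omega, by omega, by omega⟩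
  · obtain ⟨h1, h2, h3⟩ := core_ge (by linarith) hY2a (by linarith)
      (ne_of_gt hX2) (ne_of_lt hY2b) (ne_of_gt hZ2)
      (my1 hX2 ha) (my4 hY2a hY2b hb.le) (my2 hZ2 hc.le) e2
    exact ⟨by omega, by omega, by omega⟩
  · obtain ⟨h1, h2, h3⟩ := core_le (by linarith) hY2a (by linarith)
      (ne_of_gt hX2) (ne_of_lt hY2b) (ne_of_gt hZ2)
      (my2 hX2 ha.le) (my3 hY2a hY2b hb) (my1 hZ2 hc) e2
    exact ⟨by omega, by omega, by omega⟩
  · obtain ⟨h1, h2, h3⟩ := core_le (by linarith) hYCa hZCa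
      (ne_of_gt hXC) (ne_of_lt hYCb) (ne_of_lt hZCb)
      (my2 hXC ha.le) (my3 hYCa hYCb hb) (my4 hZCa hZCb hc.le) eC
    exact ⟨by omega, by omega, by omega⟩
  · obtain ⟨h1, h2, h3⟩ := core_le (by linarith) (by linarith) (by linarith)
      (ne_of_gt hX4) (ne_of_gt hY4) (ne_of_gt hZ4)
      (my2 hX4 ha.le) (my2 hY4 hb.le) (my1 hZ4 hc) e4
    exact ⟨by omega, by omega, by omega⟩
  · obtain ⟨h1, h2, h3⟩ := core_ge hXA0 hYA0 (by linarith) (ne_of_lt hXAb) (ne_of_lt hYAb)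
      (ne_of_gt hZA) (my4 hXA0 hXAb ha.le) (my4 hYA0 hYAb hb.le) (my2 hZA hc.le) eA
    exact ⟨by omega, by omega, by omega⟩
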